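/- Let q be a positive integer, Q = (q+1)/2, j a positive integer, c_1 ≥ c_2 ≥ … ≥ c_j positive integers, and δ a nonnegative integer with δ ≥ j. For k ∈ {1, …, j} define λ_k = (δ − j + 1) − ∑_{r=1}^{k−1}(θ(c_r) − 1), and let ℓ ∈ {1, …, j} be the largest index with λ_ℓ ≥ 1. Then the vector defined by x_i = θ(c_i) for i = 1, …, ℓ−1, x_ℓ = θ(min(λ_ℓ, c_ℓ)), and x_i = 1 for i = ℓ+1, …, j is feasible (each x_i is a nonnegative integer with x_i ≤ c_i and ∑_{i=1}^j x_i ≤ δ) and its value satisfies ∑_{i=1}^j π(x_i) = j − 1 + π(min(λ_ℓ, c_ℓ)) + ∑_{i=1}^{ℓ−1}(π(c_i) − 1). -/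

import Mathlib

/-- Ceiling division of natural numbers: `cdiv a b = ⌈a / b⌉` (for `b > 0`). -/
def cdiv (a b : ℕ) : ℕ := (a + b - 1) / b

/-- `⌈Q⌉` where `Q = (q+1)/2`. -/
def Qceil (q : ℕ) : ℕ := cdiv (q + 1) 2

/-- `⌊Q⌋` where `Q = (q+1)/2`. -/
def Qfloor (q : ℕ) : ℕ := (q + 1) / 2

/-- `π(Δ) = ⌈Δ/q⌉` if `Δ ≤ q`, and `π(Δ) = ⌈(Δ−q)/⌈Q⌉⌉ + 1` if `Δ > q`. -/
def piF (q Δ : ℕ) : ℕ := if Δ ≤ q then cdiv Δ q else cdiv (Δ - q) (Qceil q) + 1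

/-- `θ(α) = π(α)` if `α ≤ q`, and `θ(α) = (π(α)−1)·⌈Q⌉ + ⌊Q⌋` if `α > q`. -/
def thetaF (q α : ℕ) : ℕ := if α ≤ q then piF q α else (piF q α - 1) * Qceil q + Qfloor q

lemma QQ (q : ℕ) : Qceil q + Qfloor q = q + 1 := by unfold Qceil Qfloor cdiv; omega
lemma Qceil_pos (q : ℕ) : 0 < Qceil q := by unfold Qceil cdiv; omega

lemma pi_zero (q : ℕ) (hq : 0 < q) : piF q 0 = 0 := by
  unfold piF cdiv
  rw [if_pos (Nat.zero_le q)]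
  exact Nat.div_eq_of_lt (by omega)

lemma pi_small (q α : ℕ) (hq : 0 < q) (h1 : 1 ≤ α) (h2 : α ≤ q) : piF q α = 1 := by
  unfold piF cdiv
  rw [if_pos h2]
  exact Nat.div_eq_of_lt_le (by omega) (by omega)

lemma cdiv_pos (a b : ℕ) (ha : 1 ≤ a) (hb : 0 < b) : 1 ≤ cdiv a b := by
  unfold cdiv; rw [Nat.one_le_div_iff hb]; omega

lemma cdiv_exact (m n : ℕ) (hm : 1 ≤ m) (hn : 0 < n) : cdiv ((m - 1) * n + 1) n = m := by
  obtain ⟨k, rfl⟩ : ∃ k, m = k + 1 := ⟨m - 1, by omega⟩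
  unfold cdiv
  have h : (k + 1 - 1) * n + 1 + n - 1 = (k + 1) * n := by
    have h2 : (k + 1 - 1) = k := by omega
    rw [h2, Nat.succ_mul]; omega
  rw [h, Nat.mul_div_cancel _ hn]

lemma theta_le (q α : ℕ) (hq : 0 < q) : thetaF q α ≤ α := by
  unfold thetaF
  by_cases h : α ≤ q
  · rw [if_pos h]
    rcases Nat.eq_zero_or_pos α with h0 | h0
    · subst h0; rw [pi_zero q hq]
    · rw [pi_small q α hq h0 h]; exact h0
  · rw [if_neg h]
    push_neg at h
    unfold piF
    rw [if_neg (by omega)]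
    have hmul : cdiv (α - q) (Qceil q) * Qceil q ≤ (α - q) + Qceil q - 1 :=
      Nat.div_mul_le_self _ _
    have hQQ := QQ q
    have hQc := Qceil_pos q
    simp only [Nat.add_sub_cancel]
    omega

lemma pi_theta (q α : ℕ) (hq : 0 < q) : piF q (thetaF q α) = piF q α := by
  unfold thetaF
  by_cases h : α ≤ q
  · rw [if_pos h]
    rcases Nat.eq_zero_or_pos α with h0 | h0
    · subst h0; rw [pi_zero q hq, pi_zero q hq]
    · rw [pi_small q α hq h0 h, pi_small q 1 hq le_rfl hq]
  · rw [if_neg h]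
    push_neg at h
    have hpi : piF q α = cdiv (α - q) (Qceil q) + 1 := by unfold piF; rw [if_neg (by omega)]
    set m := cdiv (α - q) (Qceil q) with hm
    have hm1 : 1 ≤ m := cdiv_pos _ _ (by omega) (Qceil_pos q)
    have hQQ := QQ q
    have hQc := Qceil_pos q
    rw [hpi]
    simp only [Nat.add_sub_cancel]
    have hθq : ¬ (m * Qceil q + Qfloor q ≤ q) := by nlinarith
    unfold piF
    rw [if_neg hθq]
    have harg : m * Qceil q + Qfloor q - q = (m - 1) * Qceil q + 1 := by
      have : (m - 1) * Qceil q + Qceil q = m * Qceil q := by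
        rw [← Nat.succ_mul]
        congr 1
        omega
      omega
    rw [harg, cdiv_exact m (Qceil q) hm1 hQc]

lemma sum_split3 {M : Type*} [AddCommMonoid M] (f : ℕ → M) (ℓ j : ℕ) (h1 : 1 ≤ ℓ) (h2 : ℓ ≤ j) :
    ∑ i ∈ Finset.Icc 1 j, f i =
      (∑ i ∈ Finset.Icc 1 (ℓ - 1), f i) + f ℓ + ∑ i ∈ Finset.Icc (ℓ + 1) j, f i := by
  have e1 : Finset.Icc 1 j = Finset.Ioc 0 j := by exact Finset.Icc_add_one_left_eq_Ioc _ _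
  have e2 : Finset.Icc 1 (ℓ - 1) = Finset.Ioc 0 (ℓ - 1) := by exact Finset.Icc_add_one_left_eq_Ioc _ _
  have e3 : Finset.Icc (ℓ + 1) j = Finset.Ioc ℓ j := by rw [← Finset.Icc_add_one_left_eq_Ioc]
  have e4 : f ℓ = ∑ i ∈ Finset.Ioc (ℓ - 1) ℓ, f i := by
    have : Finset.Ioc (ℓ - 1) ℓ = {ℓ} := by
      ext a; simp; omega
    rw [this, Finset.sum_singleton]
  rw [e1, e2, e3, e4,
    Finset.sum_Ioc_consecutive f (Nat.zero_le (ℓ - 1)) (by omega : ℓ - 1 ≤ ℓ),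
    Finset.sum_Ioc_consecutive f (Nat.zero_le ℓ) h2]

/-- attainment half of Theorem 1: with sorted capacities and `δ ≥ j`,
the policy `x_i = θ(c_i)` for `i < ℓ`, `x_ℓ = θ(min(λ_ℓ, c_ℓ))`, `x_i = 1` for `i > ℓ`
is feasible for `DPF_j` and its value equals
`j − 1 + π(min(λ_ℓ, c_ℓ)) + ∑_{i<ℓ} (π(c_i) − 1)`. -/
theorem dpf_optimal_policy (q : ℕ) (hq : 0 < q) (j : ℕ) (hj : 0 < j)
    (c : ℕ → ℕ) (hc : ∀ i, 1 ≤ i → i ≤ j → 0 < c i)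
    (hsort : ∀ i k, 1 ≤ i → i ≤ k → k ≤ j → c k ≤ c i)
    (δ : ℕ) (hδ : j ≤ δ)
    (lam : ℕ → ℤ)
    (hlam : ∀ k, lam k =
      (δ : ℤ) - (j : ℤ) + 1 - ∑ r ∈ Finset.Icc 1 (k - 1), ((thetaF q (c r) : ℤ) - 1))
    (ℓ : ℕ) (hℓ1 : 1 ≤ ℓ) (hℓj : ℓ ≤ j) (hℓpos : 1 ≤ lam ℓ)
    (hℓmax : ∀ k, 1 ≤ k → k ≤ j → 1 ≤ lam k → k ≤ ℓ)
    (x : ℕ → ℕ)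
    (hx1 : ∀ i, 1 ≤ i → i < ℓ → x i = thetaF q (c i))
    (hx2 : x ℓ = thetaF q (min (lam ℓ).toNat (c ℓ)))
    (hx3 : ∀ i, ℓ < i → i ≤ j → x i = 1) :
    (∀ i, 1 ≤ i → i ≤ j → x i ≤ c i) ∧
    (∑ i ∈ Finset.Icc 1 j, x i ≤ δ) ∧
    ((∑ i ∈ Finset.Icc 1 j, (piF q (x i) : ℤ)) =
      (j : ℤ) - 1 + (piF q (min (lam ℓ).toNat (c ℓ)) : ℤ) +
        ∑ i ∈ Finset.Icc 1 (ℓ - 1), ((piF q (c i) : ℤ) - 1)) := by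
  have hcℓ : 0 < c ℓ := hc ℓ hℓ1 hℓj
  set μ := min (lam ℓ).toNat (c ℓ) with hμ
  -- cast sum identity
  have hTsum : ∑ r ∈ Finset.Icc 1 (ℓ - 1), ((thetaF q (c r) : ℤ) - 1)
      = ((∑ r ∈ Finset.Icc 1 (ℓ - 1), thetaF q (c r) : ℕ) : ℤ) - ((ℓ : ℤ) - 1) := by
    rw [Finset.sum_sub_distrib, Finset.sum_const, Nat.card_Icc, Nat.cast_sum,
      nsmul_eq_mul, mul_one]
    omega
  have hlamval : lam ℓ = (δ : ℤ) - j + 1 -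
      (((∑ r ∈ Finset.Icc 1 (ℓ - 1), thetaF q (c r) : ℕ) : ℤ) - ((ℓ : ℤ) - 1)) := by
    rw [hlam ℓ, hTsum]
  refine ⟨?_, ?_, ?_⟩
  · intro i h1 hij
    rcases lt_trichotomy i ℓ with h | h | h
    · rw [hx1 i h1 h]; exact theta_le q (c i) hq
    · subst h; rw [hx2]
      exact le_trans (theta_le q μ hq) (min_le_right _ _)
    · rw [hx3 i h hij]; exact hc i h1 hij
  · rw [sum_split3 x ℓ j hℓ1 hℓj]
    have hA : ∑ i ∈ Finset.Icc 1 (ℓ - 1), x i = ∑ i ∈ Finset.Icc 1 (ℓ - 1), thetaF q (c i) := by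
      refine Finset.sum_congr rfl fun i hi => ?_
      rw [Finset.mem_Icc] at hi
      exact hx1 i hi.1 (by omega)
    have hB : ∑ i ∈ Finset.Icc (ℓ + 1) j, x i = j - ℓ := by
      have h1 : ∀ i ∈ Finset.Icc (ℓ + 1) j, x i = 1 := by
        intro i hi; rw [Finset.mem_Icc] at hi; exact hx3 i (by omega) hi.2
      rw [Finset.sum_congr rfl h1, Finset.sum_const, Nat.card_Icc, smul_eq_mul, mul_one]
      omega
    have hxle : x ℓ ≤ (lam ℓ).toNat := by
      rw [hx2]
      exact le_trans (theta_le q μ hq) (min_le_left _ _)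
    rw [hA, hB]
    have htn : ((lam ℓ).toNat : ℤ) = lam ℓ := Int.toNat_of_nonneg (by omega)
    omega
  · rw [sum_split3 (fun i => (piF q (x i) : ℤ)) ℓ j hℓ1 hℓj]
    have hA : ∑ i ∈ Finset.Icc 1 (ℓ - 1), (piF q (x i) : ℤ)
        = ∑ i ∈ Finset.Icc 1 (ℓ - 1), (piF q (c i) : ℤ) := by
      refine Finset.sum_congr rfl fun i hi => ?_
      rw [Finset.mem_Icc] at hi
      rw [hx1 i hi.1 (by omega), pi_theta q (c i) hq]
    have hxℓ : (piF q (x ℓ) : ℤ) = (piF q μ : ℤ) := by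
      rw [hx2, pi_theta q μ hq]
    have hB : ∑ i ∈ Finset.Icc (ℓ + 1) j, (piF q (x i) : ℤ) = (j : ℤ) - ℓ := by
      have h1 : ∀ i ∈ Finset.Icc (ℓ + 1) j, (piF q (x i) : ℤ) = 1 := by
        intro i hi; rw [Finset.mem_Icc] at hi
        rw [hx3 i (by omega) hi.2, pi_small q 1 hq le_rfl hq]
        norm_num
      rw [Finset.sum_congr rfl h1, Finset.sum_const, Nat.card_Icc, nsmul_eq_mul, mul_one]
      omega
    have hRHS : ∑ i ∈ Finset.Icc 1 (ℓ - 1), ((piF q (c i) : ℤ) - 1)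
        = (∑ i ∈ Finset.Icc 1 (ℓ - 1), (piF q (c i) : ℤ)) - ((ℓ : ℤ) - 1) := by
      rw [Finset.sum_sub_distrib, Finset.sum_const, Nat.card_Icc, nsmul_eq_mul, mul_one]
      omega
    rw [hA, hxℓ, hB, hRHS]
    have hℓj' : (ℓ : ℤ) ≤ (j : ℤ) := by exact_mod_cast hℓj
    ring
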